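/- arXiv:2006.02815 — 12 statements merged into one kernel-verified Lean document; each statement's English description precedes it below -/
import Mathlib

section
/- Let n, p, m be positive integers, let G ∈ ℝ^{n×n} and H ∈ ℝ^{p×p} be symmetric positive semidefinite matrices, let B ∈ ℝ^{m×p}, let β > 0, and let τ, θ ∈ ℝ satisfy τ + θ > 0 and τ ≤ 1. Then for all x ∈ ℝ^n, y ∈ ℝ^p, γ ∈ ℝ^m one has ⟨Gx, x⟩ + ⟨Hy, y⟩ + ((τ − τθ + θ)β/(τ+θ))‖By‖² − (2τ/(τ+θ))⟨By, γ⟩ + (1/((τ+θ)β))‖γ‖² ≥ 0; that is, the block matrix M = [[G, 0, 0], [0, H + ((τ−τθ+θ)β/(τ+θ))BᵀB, −(τ/(τ+θ))Bᵀ], [0, −(τ/(τ+θ))B, (1/((τ+θ)β))I]] is symmetric positive semidefinite. -/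
open Matrix

lemma aux_scalar (a b c s t r : ℝ) (ha : 0 ≤ a) (hc : 0 ≤ c) (hs : 0 ≤ s)
    (hr : 0 ≤ r) (ht : t ^ 2 ≤ s * r) (hb : b ^ 2 ≤ 4 * (a * c)) :
    0 ≤ a * s - b * t + c * r := by
  nlinarith [sq_nonneg (a * s - c * r), sq_nonneg (a * s + c * r), sq_nonneg (2 * a * t - b * s),
    sq_nonneg (2 * c * t - b * r), mul_nonneg ha hs, mul_nonneg hc hr, sq_nonneg t,
    mul_nonneg (mul_nonneg ha hs) (mul_nonneg hc hr), sq_nonneg (b * t),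
    mul_le_mul ht hb (sq_nonneg b) (mul_nonneg hs hr)]

/-- The block matrix `M` of the symmetric proximal ADMM is positive
semidefinite: for symmetric PSD `G`, `H`, any `B`, `β > 0`, `τ + θ > 0`, `τ ≤ 1`,
the quadratic form `⟨Gx,x⟩ + ⟨Hy,y⟩ + ((τ−τθ+θ)β/(τ+θ))‖By‖² − (2τ/(τ+θ))⟨By,γ⟩
+ (1/((τ+θ)β))‖γ‖²` is nonnegative. -/
theorem stmt0 (n p m : ℕ) (hn : 0 < n) (hp : 0 < p) (hm : 0 < m)
    (G : Matrix (Fin n) (Fin n) ℝ) (H : Matrix (Fin p) (Fin p) ℝ)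
    (B : Matrix (Fin m) (Fin p) ℝ)
    (hG : G.PosSemidef) (hH : H.PosSemidef)
    (β τ θ : ℝ) (hβ : 0 < β) (hτθ : 0 < τ + θ) (hτ : τ ≤ 1) :
    ∀ (x : Fin n → ℝ) (y : Fin p → ℝ) (γ : Fin m → ℝ),
      (G *ᵥ x) ⬝ᵥ x + (H *ᵥ y) ⬝ᵥ y
        + ((τ - τ * θ + θ) * β / (τ + θ)) * ((B *ᵥ y) ⬝ᵥ (B *ᵥ y))
        - (2 * τ / (τ + θ)) * ((B *ᵥ y) ⬝ᵥ γ)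
        + (1 / ((τ + θ) * β)) * (γ ⬝ᵥ γ) ≥ 0 := by
  intro x y γ
  have hGx : 0 ≤ (G *ᵥ x) ⬝ᵥ x := by
    have := hG.dotProduct_mulVec_nonneg x
    simpa [dotProduct_comm, star_trivial] using this
  have hHy : 0 ≤ (H *ᵥ y) ⬝ᵥ y := by
    have := hH.dotProduct_mulVec_nonneg y
    simpa [dotProduct_comm, star_trivial] using this
  set u : Fin m → ℝ := B *ᵥ y with hu
  have hs : 0 ≤ u ⬝ᵥ u := by
    simp only [dotProduct]
    exact Finset.sum_nonneg fun i _ => mul_self_nonneg _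
  have hr : 0 ≤ γ ⬝ᵥ γ := by
    simp only [dotProduct]
    exact Finset.sum_nonneg fun i _ => mul_self_nonneg _
  have hCS : (u ⬝ᵥ γ) ^ 2 ≤ (u ⬝ᵥ u) * (γ ⬝ᵥ γ) := by
    simp only [dotProduct]
    simpa [sq] using Finset.sum_mul_sq_le_sq_mul_sq Finset.univ u γ
  -- set the scalar coefficients
  set a : ℝ := (τ - τ * θ + θ) * β / (τ + θ) with ha_def
  set b : ℝ := 2 * τ / (τ + θ) with hb_def
  set c : ℝ := 1 / ((τ + θ) * β) with hc_def
  have hnum : 0 ≤ τ - τ * θ + θ := by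
    nlinarith [mul_nonneg hτθ.le (sub_nonneg.2 hτ), sq_nonneg τ]
  have ha : 0 ≤ a := by positivity
  have hc : 0 ≤ c := by positivity
  have hb : b ^ 2 ≤ 4 * (a * c) := by
    rw [ha_def, hb_def, hc_def]
    have h1 : (τ + θ) ≠ 0 := hτθ.ne'
    have h2 : β ≠ 0 := hβ.ne'
    rw [div_pow, div_mul_div_comm, ← mul_div_assoc, div_le_div_iff₀ (by positivity) (by positivity)]
    nlinarith [mul_nonneg (mul_nonneg hτθ.le (sub_nonneg.2 hτ)) (mul_pos hτθ hβ).le,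
      mul_pos hτθ hβ, sq_nonneg τ]
  have key := aux_scalar a b c (u ⬝ᵥ u) (u ⬝ᵥ γ) (γ ⬝ᵥ γ) ha hc hs hr hCS hb
  linarith
end

section
/- Let f : ℝ^n → ℝ and g : ℝ^p → ℝ be convex, let A ∈ ℝ^{m×n}, B ∈ ℝ^{m×p}, b ∈ ℝ^m. Suppose (x, y, γ) and (x', y', γ') are given, u, u' ∈ ℝ^n and v, v' ∈ ℝ^p satisfy: u + Aᵀγ is a subgradient of f at x, u' + Aᵀγ' is a subgradient of f at x', v + Bᵀγ is a subgradient of g at y, and v' + Bᵀγ' is a subgradient of g at y'. Set w = Ax + By − b and w' = Ax' + By' − b. Then ⟨u − u', x − x'⟩ + ⟨v − v', y − y'⟩ + ⟨w − w', γ − γ'⟩ ≥ 0, i.e. the operator T(x,y,γ) = (∂f(x) − Aᵀγ, ∂g(y) − Bᵀγ, Ax + By − b) is monotone. -/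
open Matrix

lemma aux_key {m n : ℕ} (A : Matrix (Fin m) (Fin n) ℝ) (γ : Fin m → ℝ) (x : Fin n → ℝ) :
    (Aᵀ *ᵥ γ) ⬝ᵥ x = γ ⬝ᵥ (A *ᵥ x) := by
  rw [Matrix.mulVec_transpose, ← Matrix.dotProduct_mulVec]

/-- Monotonicity of the ADMM operator
`T(x,y,γ) = (∂f(x) − Aᵀγ, ∂g(y) − Bᵀγ, Ax + By − b)`. -/
theorem stmt1 (n p m : ℕ)
    (f : (Fin n → ℝ) → ℝ) (g : (Fin p → ℝ) → ℝ)
    (hf : ConvexOn ℝ Set.univ f) (hg : ConvexOn ℝ Set.univ g)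
    (A : Matrix (Fin m) (Fin n) ℝ) (B : Matrix (Fin m) (Fin p) ℝ) (b : Fin m → ℝ)
    (x x' : Fin n → ℝ) (y y' : Fin p → ℝ) (γ γ' : Fin m → ℝ)
    (u u' : Fin n → ℝ) (v v' : Fin p → ℝ)
    (hu : ∀ z, f z ≥ f x + (u + Aᵀ *ᵥ γ) ⬝ᵥ (z - x))
    (hu' : ∀ z, f z ≥ f x' + (u' + Aᵀ *ᵥ γ') ⬝ᵥ (z - x'))
    (hv : ∀ z, g z ≥ g y + (v + Bᵀ *ᵥ γ) ⬝ᵥ (z - y))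
    (hv' : ∀ z, g z ≥ g y' + (v' + Bᵀ *ᵥ γ') ⬝ᵥ (z - y'))
    (w w' : Fin m → ℝ)
    (hw : w = A *ᵥ x + B *ᵥ y - b) (hw' : w' = A *ᵥ x' + B *ᵥ y' - b) :
    (u - u') ⬝ᵥ (x - x') + (v - v') ⬝ᵥ (y - y') + (w - w') ⬝ᵥ (γ - γ') ≥ 0 := by
  have h1 := hu x'
  have h2 := hu' x
  have h3 := hv y'
  have h4 := hv' y
  subst hw hw'
  simp only [add_dotProduct, sub_dotProduct, dotProduct_sub,
    dotProduct_add, aux_key] at *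
  have e1 : γ ⬝ᵥ (A *ᵥ x) = (A *ᵥ x) ⬝ᵥ γ := dotProduct_comm _ _
  have e2 : γ ⬝ᵥ (A *ᵥ x') = (A *ᵥ x') ⬝ᵥ γ := dotProduct_comm _ _
  have e3 : γ' ⬝ᵥ (A *ᵥ x) = (A *ᵥ x) ⬝ᵥ γ' := dotProduct_comm _ _
  have e4 : γ' ⬝ᵥ (A *ᵥ x') = (A *ᵥ x') ⬝ᵥ γ' := dotProduct_comm _ _
  have e5 : γ ⬝ᵥ (B *ᵥ y) = (B *ᵥ y) ⬝ᵥ γ := dotProduct_comm _ _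
  have e6 : γ ⬝ᵥ (B *ᵥ y') = (B *ᵥ y') ⬝ᵥ γ := dotProduct_comm _ _
  have e7 : γ' ⬝ᵥ (B *ᵥ y) = (B *ᵥ y) ⬝ᵥ γ' := dotProduct_comm _ _
  have e8 : γ' ⬝ᵥ (B *ᵥ y') = (B *ᵥ y') ⬝ᵥ γ' := dotProduct_comm _ _
  linarith
end

section
/- Let g : ℝ^p → ℝ be convex, let H ∈ ℝ^{p×p}, B ∈ ℝ^{m×p}, A ∈ ℝ^{m×n}, b ∈ ℝ^m, β > 0, and τ, θ ∈ ℝ with τ + θ ≠ 0. Let x̃ ∈ ℝ^n, y_{k−1}, y_k ∈ ℝ^p, γ_{k−1} ∈ ℝ^m, and define γ̃ = γ_{k−1} − β(Ax̃ + By_{k−1} − b), γ_{k−1/2} = γ_{k−1} − τβ(Ax̃ + By_{k−1} − b), and γ_k = γ_{k−1/2} − θβ(Ax̃ + By_k − b). If Bᵀ[γ_{k−1/2} − β(Ax̃ + By_k − b)] − H(y_k − y_{k−1}) is a subgradient of g at y_k (the first-order optimality condition of the y-subproblem), then the vector v := (H + ((τ − τθ + θ)β/(τ+θ))BᵀB)(y_{k−1}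 − y_k) − (τ/(τ+θ))Bᵀ(γ_{k−1} − γ_k) is such that v + Bᵀγ̃ is a subgradient of g at y_k. -/
open Matrix

/-- From the first-order optimality condition of the `y`-subproblem,
the vector `v = (H + ((τ−τθ+θ)β/(τ+θ))BᵀB)(y_{k−1}−y_k) − (τ/(τ+θ))Bᵀ(γ_{k−1}−γ_k)`
satisfies `v + Bᵀγ̃ ∈ ∂g(y_k)`. -/
theorem stmt5 (n p m : ℕ)
    (g : (Fin p → ℝ) → ℝ) (hg : ConvexOn ℝ Set.univ g)
    (H : Matrix (Fin p) (Fin p) ℝ)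
    (B : Matrix (Fin m) (Fin p) ℝ) (A : Matrix (Fin m) (Fin n) ℝ) (b : Fin m → ℝ)
    (β τ θ : ℝ) (hβ : 0 < β) (hτθ : τ + θ ≠ 0)
    (xt : Fin n → ℝ) (ykm1 yk : Fin p → ℝ) (γkm1 : Fin m → ℝ)
    (γt γhalf γk : Fin m → ℝ)
    (hγt : γt = γkm1 - β • (A *ᵥ xt + B *ᵥ ykm1 - b))
    (hγhalf : γhalf = γkm1 - (τ * β) • (A *ᵥ xt + B *ᵥ ykm1 - b))
    (hγk : γk = γhalf - (θ * β) • (A *ᵥ xt + B *ᵥ yk - b))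
    (hopt : ∀ z, g z ≥ g yk +
      (Bᵀ *ᵥ (γhalf - β • (A *ᵥ xt + B *ᵥ yk - b)) - H *ᵥ (yk - ykm1)) ⬝ᵥ (z - yk))
    (v : Fin p → ℝ)
    (hv : v = (H + ((τ - τ * θ + θ) * β / (τ + θ)) • (Bᵀ * B)) *ᵥ (ykm1 - yk)
              - (τ / (τ + θ)) • (Bᵀ *ᵥ (γkm1 - γk))) :
    ∀ z, g z ≥ g yk + (v + Bᵀ *ᵥ γt) ⬝ᵥ (z - yk) := by
  intro z
  have key : v + Bᵀ *ᵥ γt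
      = Bᵀ *ᵥ (γhalf - β • (A *ᵥ xt + B *ᵥ yk - b)) - H *ᵥ (yk - ykm1) := by
    subst hγt hγhalf hγk hv
    funext i
    simp only [Matrix.add_mulVec, Matrix.mulVec_sub, Matrix.mulVec_add,
      Matrix.mulVec_smul, Matrix.smul_mulVec, Matrix.mulVec_mulVec,
      smul_sub, smul_add, Pi.add_apply, Pi.sub_apply, Pi.smul_apply,
      smul_eq_mul, smul_smul]
    field_simp
    ring
  rw [← key] at hopt
  exact hopt z
end

section
/- Let M ∈ ℝ^{N×N} be symmetric positive semidefinite and let T : ℝ^N → Set(ℝ^N) be a monotone set-valued operator, i.e. ⟨w − w', z − z'⟩ ≥ 0 whenever w ∈ T(z) and w' ∈ T(z'). Let z*, z_{k−1}, z_k, z̃_k ∈ ℝ^N satisfy 0 ∈ T(z*) and M(z_{k−1} − z_k) ∈ T(z̃_k). Then ‖z* − z_k‖_M² − ‖z* − z_{k−1}‖_M² ≤ ‖z̃_k − z_k‖_M² − ‖z̃_k − z_{k−1}‖_M². -/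
open Matrix

/-- For a symmetric PSD matrix `M` and monotone set-valued operator `T`
with `0 ∈ T(z*)` and `M(z_{k−1} − z_k) ∈ T(z̃_k)`, one has
`‖z*−z_k‖_M² − ‖z*−z_{k−1}‖_M² ≤ ‖z̃_k−z_k‖_M² − ‖z̃_k−z_{k−1}‖_M²`. -/
theorem stmt6 (N : ℕ) (M : Matrix (Fin N) (Fin N) ℝ) (hM : M.PosSemidef)
    (T : (Fin N → ℝ) → Set (Fin N → ℝ))
    (hT : ∀ z z' w w', w ∈ T z → w' ∈ T z' → 0 ≤ (w - w') ⬝ᵥ (z - z'))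
    (zs zkm1 zk zt : Fin N → ℝ)
    (hzs : (0 : Fin N → ℝ) ∈ T zs)
    (hincl : M *ᵥ (zkm1 - zk) ∈ T zt) :
    (M *ᵥ (zs - zk)) ⬝ᵥ (zs - zk) - (M *ᵥ (zs - zkm1)) ⬝ᵥ (zs - zkm1)
      ≤ (M *ᵥ (zt - zk)) ⬝ᵥ (zt - zk) - (M *ᵥ (zt - zkm1)) ⬝ᵥ (zt - zkm1) := by
  have key := hT zt zs (M *ᵥ (zkm1 - zk)) 0 hincl hzs
  rw [sub_zero] at key
  have hsymm : ∀ x y : Fin N → ℝ, (M *ᵥ x) ⬝ᵥ y = (M *ᵥ y) ⬝ᵥ x := by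
    intro x y
    have hMt : Mᵀ = M := by
      have := hM.1
      rwa [Matrix.IsHermitian, conjTranspose_eq_transpose_of_trivial] at this
    rw [dotProduct_comm, dotProduct_mulVec, ← mulVec_transpose, hMt]
  simp only [mulVec_sub, sub_dotProduct, dotProduct_sub] at *
  have h1 := hsymm zkm1 zt
  have h2 := hsymm zkm1 zs
  have h3 := hsymm zk zt
  have h4 := hsymm zk zs
  have h5 := hsymm zkm1 zk
  linarith
end

section
/- Let β > 0, σ̃ ∈ [0,1), and let (τ, θ) belong to the region R_σ̃, i.e. τ ∈ (−1, 1−σ̃), τ + θ > 0, and (1−τ²)(2−τ−θ−σ̃) − (1−θ)²(1−τ−σ̃) > 0. Define ϑ = √((3−3τ−2σ̃)(4−τ−θ−2σ̃)) − 2(1−τ−σ̃). Then ϑ > 0, the 2×2 matrix [[(3−3τ−2σ̃)β, 2(1−τ−σ̃)], [2(1−τ−σ̃), (4−τ−θ−2σ̃)/β]] is symmetric positive definite, and for all vectors y, γ ∈ ℝ^m one has (3−3τ−2σ̃)β‖y‖² + 4(1−τ−σ̃)⟨y, γ⟩ + ((4−τ−θ−2σ̃)/β)‖γ‖² ≥ −2ϑ⟨y,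 γ⟩. -/
open Matrix

lemma aux_det (u p w s : ℝ) (hu : 0 < u) (hp : 0 < p) (hw : 0 < w) (hs : 0 ≤ s)
    (hreg : (w - u) ^ 2 * u < p * (u + s) * w) :
    u ^ 2 < 3 * u * p + 3 * u * w + s * (u + p + w) := by
  nlinarith [mul_pos hu hp, mul_pos hu hw, mul_pos hp hw, sq_nonneg (u - w),
    mul_nonneg hs hu.le, mul_nonneg hs hp.le, mul_nonneg hs hw.le,
    mul_pos (mul_pos hu hp) hw, sq_nonneg (u + w), sq_nonneg (p - w), sq_nonneg (p - u)]

lemma aux_quad (A B C x0 x1 : ℝ) (hA : 0 < A) (hd : B ^ 2 < A * C)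
    (hx : x0 ≠ 0 ∨ x1 ≠ 0) :
    0 < A * x0 ^ 2 + 2 * B * (x0 * x1) + C * x1 ^ 2 := by
  by_cases h1 : x1 = 0
  · have h0 : x0 ≠ 0 := by rcases hx with h | h; exact h; exact absurd h1 h
    have : 0 < x0 ^ 2 := by positivity
    subst h1
    simp only [mul_zero, zero_pow, add_zero]
    nlinarith
  · have h2 : 0 < x1 ^ 2 := by positivity
    nlinarith [sq_nonneg (A * x0 + B * x1), mul_pos (sub_pos.2 hd) h2]

lemma aux_vec (A C s P Y G : ℝ) (hA : 0 < A) (hC : 0 < C) (hY : 0 ≤ Y) (hG : 0 ≤ G)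
    (hs : 0 ≤ s) (hs2 : s ^ 2 = A * C) (hCS : P ^ 2 ≤ Y * G) :
    0 ≤ A * Y + 2 * s * P + C * G := by
  rcases le_or_gt 0 P with hP | hP
  · have := mul_nonneg hA.le hY
    have := mul_nonneg hC.le hG
    have := mul_nonneg hs hP
    nlinarith
  · have h1 : (2 * s * (-P)) ^ 2 ≤ (A * Y + C * G) ^ 2 := by
      nlinarith [sq_nonneg (A * Y - C * G),
        mul_le_mul_of_nonneg_left hCS (by nlinarith [sq_nonneg s] : (0:ℝ) ≤ 4 * (A * C))]
    have h3 : 0 ≤ 2 * s * (-P) := by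
      have : 0 ≤ -P := by linarith
      positivity
    have h4 : 0 ≤ A * Y + C * G := by
      have := mul_nonneg hA.le hY
      have := mul_nonneg hC.le hG
      linarith
    have h5 : 2 * s * (-P) ≤ A * Y + C * G :=
      (pow_le_pow_iff_left₀ h3 h4 two_ne_zero).mp h1
    linarith

/-- For `(τ,θ)` in the region `R_σ̃`, the scalar
`ϑ = √((3−3τ−2σ̃)(4−τ−θ−2σ̃)) − 2(1−τ−σ̃)` is positive, the 2×2 matrix `Q̂` is
symmetric positive definite, and the associated quadratic form dominates `−2ϑ⟨y,γ⟩`. -/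
theorem stmt7 (m : ℕ) (β σt τ θ : ℝ) (hβ : 0 < β) (hσt0 : 0 ≤ σt) (hσt1 : σt < 1)
    (hτl : -1 < τ) (hτu : τ < 1 - σt) (hτθ : 0 < τ + θ)
    (hreg : (1 - τ ^ 2) * (2 - τ - θ - σt) - (1 - θ) ^ 2 * (1 - τ - σt) > 0)
    (ϑ : ℝ)
    (hϑ : ϑ = Real.sqrt ((3 - 3 * τ - 2 * σt) * (4 - τ - θ - 2 * σt))
              - 2 * (1 - τ - σt)) :
    0 < ϑ ∧
    (Matrix.PosDef
      !![(3 - 3 * τ - 2 * σt) * β, 2 * (1 - τ - σt);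
         2 * (1 - τ - σt), (4 - τ - θ - 2 * σt) / β]) ∧
    ∀ (y γ : Fin m → ℝ),
      (3 - 3 * τ - 2 * σt) * β * (y ⬝ᵥ y) + 4 * (1 - τ - σt) * (y ⬝ᵥ γ)
        + ((4 - τ - θ - 2 * σt) / β) * (γ ⬝ᵥ γ) ≥ -(2 * ϑ) * (y ⬝ᵥ γ) := by
  have hu : 0 < 1 - τ - σt := by linarith
  have ha : 0 < 3 - 3 * τ - 2 * σt := by linarith
  have ht1 : τ < 1 := by linarith
  have h1t : 0 < 1 - τ ^ 2 := by nlinarith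
  have hc2 : 0 < 2 - τ - θ - σt := by
    nlinarith [sq_nonneg (1 - θ)]
  have hc : 0 < 4 - τ - θ - 2 * σt := by linarith
  have hdet : (2 * (1 - τ - σt)) ^ 2 < (3 - 3 * τ - 2 * σt) * (4 - τ - θ - 2 * σt) := by
    have hp : 0 < 1 + τ := by linarith
    have haux := aux_det (1 - τ - σt) (1 + τ) (2 - τ - θ - σt) σt hu hp hc2 hσt0
      (by nlinarith [hreg])
    nlinarith [haux]
  have hacnn : 0 ≤ (3 - 3 * τ - 2 * σt) * (4 - τ - θ - 2 * σt) := (mul_pos ha hc).le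
  set s := Real.sqrt ((3 - 3 * τ - 2 * σt) * (4 - τ - θ - 2 * σt)) with hs
  have hs0 : 0 ≤ s := Real.sqrt_nonneg _
  have hs2 : s ^ 2 = (3 - 3 * τ - 2 * σt) * (4 - τ - θ - 2 * σt) := Real.sq_sqrt hacnn
  have haβ : 0 < (3 - 3 * τ - 2 * σt) * β := mul_pos ha hβ
  have hcβ : 0 < (4 - τ - θ - 2 * σt) / β := div_pos hc hβ
  have key : ((3 - 3 * τ - 2 * σt) * β) * ((4 - τ - θ - 2 * σt) / β)
      = (3 - 3 * τ - 2 * σt) * (4 - τ - θ - 2 * σt) := by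
    field_simp
  have hϑpos : 0 < ϑ := by
    rw [hϑ]
    have : 2 * (1 - τ - σt) < s := by
      nlinarith [sq_nonneg (s - 2 * (1 - τ - σt)), sq_nonneg (s + 2 * (1 - τ - σt))]
    linarith
  refine ⟨hϑpos, ?_, ?_⟩
  · rw [Matrix.posDef_iff_dotProduct_mulVec]
    constructor
    · ext i j
      fin_cases i <;> fin_cases j <;>
        simp [Matrix.conjTranspose, Matrix.transpose]
    · intro x hx
      have hx01 : x 0 ≠ 0 ∨ x 1 ≠ 0 := by
        by_contra h
        push_neg at h
        apply hx
        funext i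
        fin_cases i <;> simp [h.1, h.2]
      have hexpand : star x ⬝ᵥ
          (!![(3 - 3 * τ - 2 * σt) * β, 2 * (1 - τ - σt);
             2 * (1 - τ - σt), (4 - τ - θ - 2 * σt) / β] *ᵥ x)
          = ((3 - 3 * τ - 2 * σt) * β) * (x 0) ^ 2
            + 2 * (2 * (1 - τ - σt)) * (x 0 * x 1)
            + ((4 - τ - θ - 2 * σt) / β) * (x 1) ^ 2 := by
        simp [dotProduct, Matrix.mulVec, Fin.sum_univ_two]
        ring
      rw [hexpand]
      exact aux_quad _ _ _ _ _ haβ (by rw [key]; exact hdet) hx01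
  · intro y γ
    have hY : 0 ≤ y ⬝ᵥ y := Finset.sum_nonneg fun i _ => mul_self_nonneg (y i)
    have hG : 0 ≤ γ ⬝ᵥ γ := Finset.sum_nonneg fun i _ => mul_self_nonneg (γ i)
    have hCS : (y ⬝ᵥ γ) ^ 2 ≤ (y ⬝ᵥ y) * (γ ⬝ᵥ γ) := by
      have := Finset.sum_mul_sq_le_sq_mul_sq Finset.univ y γ
      simpa [dotProduct, sq, mul_comm] using this
    have hvec := aux_vec ((3 - 3 * τ - 2 * σt) * β) ((4 - τ - θ - 2 * σt) / β) s
      (y ⬝ᵥ γ) (y ⬝ᵥ y) (γ ⬝ᵥ γ) haβ hcβ hY hG hs0 (by rw [hs2, key]) hCS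
    rw [hϑ]
    linarith
end

section
/- Let σ̃ ∈ [0,1), σ̂ ∈ [0,1), and let (τ, θ) belong to the region R_σ̃, i.e. τ ∈ (−1, 1−σ̃), τ + θ > 0, and (1−τ²)(2−τ−θ−σ̃) − (1−θ)²(1−τ−σ̃) > 0. Define φ(σ) = (1−τ)(σ−1) + (1−τ−σ̃)(τ+θ), φ̂(σ) = (1−τ)[(1+θ)σ − 1 + τ] − σ̃(τ+θ), φ̃(σ) = σ − (1−τ−θ)² − σ̃(τ+θ), and φ̄(σ) = [(1+τ)φ̂(σ) − 2τφ(σ)](1+τ)φ̃(σ) − (1−θ)²(φ(σ))². Then there exists σ ∈ [σ̂, 1) such that φ(σ) ≥ 0, φ̂(σ) ≥ 0, φ̃(σ) > 0, and φ̄(σ) ≥ 0. -/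
/-- Existence of `σ ∈ [σ̂, 1)` making the four auxiliary functions
`φ, φ̂, φ̃, φ̄` have the required signs, for `(τ,θ)` in the region `R_σ̃`. -/
theorem stmt8 (σt σh τ θ : ℝ) (hσt0 : 0 ≤ σt) (hσt1 : σt < 1)
    (hσh0 : 0 ≤ σh) (hσh1 : σh < 1)
    (hτl : -1 < τ) (hτu : τ < 1 - σt) (hτθ : 0 < τ + θ)
    (hreg : (1 - τ ^ 2) * (2 - τ - θ - σt) - (1 - θ) ^ 2 * (1 - τ - σt) > 0)
    (φ φh φt φb : ℝ → ℝ)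
    (hφ : ∀ σ, φ σ = (1 - τ) * (σ - 1) + (1 - τ - σt) * (τ + θ))
    (hφh : ∀ σ, φh σ = (1 - τ) * ((1 + θ) * σ - 1 + τ) - σt * (τ + θ))
    (hφt : ∀ σ, φt σ = σ - (1 - τ - θ) ^ 2 - σt * (τ + θ))
    (hφb : ∀ σ, φb σ = ((1 + τ) * φh σ - 2 * τ * φ σ) * ((1 + τ) * φt σ)
                        - (1 - θ) ^ 2 * (φ σ) ^ 2) :
    ∃ σ : ℝ, σh ≤ σ ∧ σ < 1 ∧ 0 ≤ φ σ ∧ 0 ≤ φh σ ∧ 0 < φt σ ∧ 0 ≤ φb σ := by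
  have hB : (0:ℝ) < 1 - τ - σt := by linarith
  have hτ1 : τ < 1 := by linarith
  have hτsq : (0:ℝ) < 1 - τ ^ 2 := by nlinarith
  have h2 : (0:ℝ) < 2 - τ - θ - σt := by nlinarith [sq_nonneg (1 - θ)]
  -- values at 1
  have hφ1 : 0 < φ 1 := by rw [hφ]; nlinarith
  have hφh1 : 0 < φh 1 := by rw [hφh]; nlinarith
  have hφt1 : 0 < φt 1 := by rw [hφt]; nlinarith
  have hφb1 : 0 < φb 1 := by
    have : φb 1 = (τ + θ) ^ 2 * (1 - τ - σt) *
        ((1 - τ ^ 2) * (2 - τ - θ - σt) - (1 - θ) ^ 2 * (1 - τ - σt)) := by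
      rw [hφb, hφh, hφ, hφt]; ring
    rw [this]
    positivity
  -- continuity
  have hφc : Continuous φ := by
    have : φ = fun σ => (1 - τ) * (σ - 1) + (1 - τ - σt) * (τ + θ) := funext hφ
    rw [this]; continuity
  have hφhc : Continuous φh := by
    have : φh = fun σ => (1 - τ) * ((1 + θ) * σ - 1 + τ) - σt * (τ + θ) := funext hφh
    rw [this]; continuity
  have hφtc : Continuous φt := by
    have : φt = fun σ => σ - (1 - τ - θ) ^ 2 - σt * (τ + θ) := funext hφt
    rw [this]; continuity
  have hφbc : Continuous φb := by
    have : φb = fun σ => ((1 + τ) * φh σ - 2 * τ * φ σ) * ((1 + τ) * φt σ)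
        - (1 - θ) ^ 2 * (φ σ) ^ 2 := funext hφb
    rw [this]
    exact (((continuous_const.mul hφhc).sub (continuous_const.mul hφc)).mul
      (continuous_const.mul hφtc)).sub (continuous_const.mul (hφc.pow 2))
  have hne : (nhdsWithin (1:ℝ) (Set.Iio 1)).NeBot := nhdsLT_neBot 1
  have e0 : ∀ᶠ σ in nhdsWithin (1:ℝ) (Set.Iio 1), σ < 1 :=
    eventually_mem_nhdsWithin.mono (fun x hx => hx)
  have eh : ∀ᶠ σ in nhdsWithin (1:ℝ) (Set.Iio 1), σh < σ :=
    eventually_nhdsWithin_of_eventually_nhds (eventually_gt_nhds hσh1)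
  have e1 : ∀ᶠ σ in nhdsWithin (1:ℝ) (Set.Iio 1), 0 < φ σ :=
    eventually_nhdsWithin_of_eventually_nhds
      (hφc.continuousAt.eventually_const_lt hφ1)
  have e2 : ∀ᶠ σ in nhdsWithin (1:ℝ) (Set.Iio 1), 0 < φh σ :=
    eventually_nhdsWithin_of_eventually_nhds
      (hφhc.continuousAt.eventually_const_lt hφh1)
  have e3 : ∀ᶠ σ in nhdsWithin (1:ℝ) (Set.Iio 1), 0 < φt σ :=
    eventually_nhdsWithin_of_eventually_nhds
      (hφtc.continuousAt.eventually_const_lt hφt1)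
  have e4 : ∀ᶠ σ in nhdsWithin (1:ℝ) (Set.Iio 1), 0 < φb σ :=
    eventually_nhdsWithin_of_eventually_nhds
      (hφbc.continuousAt.eventually_const_lt hφb1)
  obtain ⟨σ, h0, hh, h1, h2', h3, h4⟩ :=
    (e0.and (eh.and (e1.and (e2.and (e3.and e4))))).exists
  exact ⟨σ, le_of_lt hh, h0, le_of_lt h1, le_of_lt h2', h3, le_of_lt h4⟩
end

section
/- Let g : ℝ^p → ℝ be convex, H ∈ ℝ^{p×p} symmetric positive semidefinite, B ∈ ℝ^{m×p}, β > 0, and τ, θ ∈ ℝ. Let y_{k−2}, y_{k−1}, y_k ∈ ℝ^p, γ_{k−1}, γ_k ∈ ℝ^m, q_{k−1}, q_k ∈ ℝ^m, and set p_k = B(y_k − y_{k−1}). Assume: (i) Bᵀ[γ_k + (1−θ)q_k] − H(y_k − y_{k−1}) is a subgradient of g at y_k; (ii) Bᵀ[γ_{k−1} + (1−θ)q_{k−1}] − H(y_{k−1} − y_{k−2}) is a subgradient of g at y_{k−1}; (iii) γ_k − γ_{k−1} = τβ p_k + (τ+θ) q_k. Then 2(1+τ)⟨p_k, q_k⟩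 ≥ 2(1−θ)⟨p_k, q_{k−1}⟩ − 2τβ‖p_k‖² + ‖y_k − y_{k−1}‖_H² − ‖y_{k−1} − y_{k−2}‖_H². -/
open Matrix

/-- Key inequality obtained from the monotonicity of `∂g` applied to
consecutive optimality conditions of the `y`-subproblem. -/
theorem stmt13 (p_ m : ℕ)
    (g : (Fin p_ → ℝ) → ℝ) (hg : ConvexOn ℝ Set.univ g)
    (H : Matrix (Fin p_) (Fin p_) ℝ) (hH : H.PosSemidef)
    (B : Matrix (Fin m) (Fin p_) ℝ)
    (β τ θ : ℝ) (hβ : 0 < β)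
    (ykm2 ykm1 yk : Fin p_ → ℝ) (γkm1 γk qkm1 qk : Fin m → ℝ)
    (pk : Fin m → ℝ) (hpk : pk = B *ᵥ (yk - ykm1))
    (hopt1 : ∀ z, g z ≥ g yk +
      (Bᵀ *ᵥ (γk + (1 - θ) • qk) - H *ᵥ (yk - ykm1)) ⬝ᵥ (z - yk))
    (hopt2 : ∀ z, g z ≥ g ykm1 +
      (Bᵀ *ᵥ (γkm1 + (1 - θ) • qkm1) - H *ᵥ (ykm1 - ykm2)) ⬝ᵥ (z - ykm1))
    (hγ : γk - γkm1 = (τ * β) • pk + (τ + θ) • qk) :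
    2 * (1 + τ) * (pk ⬝ᵥ qk)
      ≥ 2 * (1 - θ) * (pk ⬝ᵥ qkm1) - 2 * τ * β * (pk ⬝ᵥ pk)
        + (H *ᵥ (yk - ykm1)) ⬝ᵥ (yk - ykm1)
        - (H *ᵥ (ykm1 - ykm2)) ⬝ᵥ (ykm1 - ykm2) := by
  have hHt : Hᵀ = H := by
    ext i j
    have := congrFun (congrFun hH.1 i) j
    simpa using this
  have hT : ∀ (v : Fin m → ℝ) (w : Fin p_ → ℝ),
      (Bᵀ *ᵥ v) ⬝ᵥ w = v ⬝ᵥ (B *ᵥ w) := by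
    intro v w
    rw [Matrix.mulVec_transpose, ← Matrix.dotProduct_mulVec]
  have hsym : ∀ (x y : Fin p_ → ℝ), (H *ᵥ x) ⬝ᵥ y = (H *ᵥ y) ⬝ᵥ x := by
    intro x y
    rw [dotProduct_comm, Matrix.dotProduct_mulVec, ← Matrix.mulVec_transpose, hHt]
  have hpsd0 : ∀ (x : Fin p_ → ℝ), 0 ≤ x ⬝ᵥ (H *ᵥ x) := by
    intro x
    have := hH.dotProduct_mulVec_nonneg x
    simpa using this
  have hpsd' : ∀ (x y : Fin p_ → ℝ),
      0 ≤ (H *ᵥ x) ⬝ᵥ x - 2 * ((H *ᵥ y) ⬝ᵥ x) + (H *ᵥ y) ⬝ᵥ y := by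
    intro x y
    have h0 := hpsd0 (x - y)
    have hexp : (x - y) ⬝ᵥ (H *ᵥ (x - y))
        = (H *ᵥ x) ⬝ᵥ x - 2 * ((H *ᵥ y) ⬝ᵥ x) + (H *ᵥ y) ⬝ᵥ y := by
      rw [Matrix.mulVec_sub, dotProduct_sub, sub_dotProduct,
        sub_dotProduct, dotProduct_comm x (H *ᵥ x),
        dotProduct_comm x (H *ᵥ y), dotProduct_comm y (H *ᵥ x),
        dotProduct_comm y (H *ᵥ y), hsym x y]
      ring
    linarith [hexp ▸ h0]
  have h1 := hopt1 ykm1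
  have h2 := hopt2 yk
  have hm1 : ykm1 - yk = -(yk - ykm1) := by abel
  rw [hm1, dotProduct_neg] at h1
  have hmono : (Bᵀ *ᵥ (γkm1 + (1 - θ) • qkm1) - H *ᵥ (ykm1 - ykm2)) ⬝ᵥ (yk - ykm1)
      ≤ (Bᵀ *ᵥ (γk + (1 - θ) • qk) - H *ᵥ (yk - ykm1)) ⬝ᵥ (yk - ykm1) := by
    linarith
  rw [sub_dotProduct, sub_dotProduct, hT, hT, ← hpk] at hmono
  have e1 : (γk + (1 - θ) • qk) ⬝ᵥ pk
      = γk ⬝ᵥ pk + (1 - θ) * (qk ⬝ᵥ pk) := by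
    rw [add_dotProduct, smul_dotProduct]; simp
  have e2 : (γkm1 + (1 - θ) • qkm1) ⬝ᵥ pk
      = γkm1 ⬝ᵥ pk + (1 - θ) * (qkm1 ⬝ᵥ pk) := by
    rw [add_dotProduct, smul_dotProduct]; simp
  have e3 : γk ⬝ᵥ pk - γkm1 ⬝ᵥ pk
      = τ * β * (pk ⬝ᵥ pk) + (τ + θ) * (qk ⬝ᵥ pk) := by
    have := congrArg (fun v => v ⬝ᵥ pk) hγ
    simpa [sub_dotProduct, add_dotProduct,
      smul_dotProduct, smul_eq_mul] using this
  rw [e1, e2] at hmono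
  have hp := hpsd' (yk - ykm1) (ykm1 - ykm2)
  have c1 : pk ⬝ᵥ qk = qk ⬝ᵥ pk := dotProduct_comm _ _
  have c2 : pk ⬝ᵥ qkm1 = qkm1 ⬝ᵥ pk := dotProduct_comm _ _
  rw [c1, c2]
  linarith
end

section
/- Let β > 0, σ̃ ∈ [0,1), σ̂ ∈ [0,1), σ ∈ [σ̂, 1), and τ, θ ∈ ℝ with τ + θ > 0. Let G ∈ ℝ^{n×n}, H ∈ ℝ^{p×p} be symmetric positive semidefinite and B ∈ ℝ^{m×p}, and define the quadratic form Q_M(x, y, γ) = ⟨Gx, x⟩ + ⟨Hy, y⟩ + ((τ−τθ+θ)β/(τ+θ))‖By‖² − (2τ/(τ+θ))⟨By, γ⟩ + (1/((τ+θ)β))‖γ‖². Let x̃, x_{k−1}, x_k ∈ ℝ^n, y_{k−1}, y_k ∈ ℝ^p, q ∈ ℝ^m, set p = B(y_k − y_{k−1}), and assume the relative error criterion ‖x̃ − x_k‖_G² ≤ σ̂‖x̃ − x_{k−1}‖_G² + (σ̃/β)‖βp + q‖². Then σ·Q_M(x̃ − x_{k−1}, y_k − y_{k−1}, βp + q) −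 Q_M(x̃ − x_k, 0, (1−τ)βp + (1−τ−θ)q) ≥ (φ̂(σ)β/(τ+θ))‖p‖² + (2φ(σ)/(τ+θ))⟨p, q⟩ + (φ̃(σ)/((τ+θ)β))‖q‖², where φ(σ) = (1−τ)(σ−1) + (1−τ−σ̃)(τ+θ), φ̂(σ) = (1−τ)[(1+θ)σ − 1 + τ] − σ̃(τ+θ), and φ̃(σ) = σ − (1−τ−θ)² − σ̃(τ+θ). -/
open Matrix

lemma dot_expand {m : ℕ} (u v : Fin m → ℝ) (c d : ℝ) :
    (c • u + d • v) ⬝ᵥ (c • u + d • v)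
      = c^2 * (u ⬝ᵥ u) + 2*c*d*(u ⬝ᵥ v) + d^2 * (v ⬝ᵥ v) := by
  simp [dotProduct_add, add_dotProduct, dotProduct_smul, smul_dotProduct,
    dotProduct_comm v u]
  ring

lemma dot_expand2 {m : ℕ} (u v : Fin m → ℝ) (c d : ℝ) :
    u ⬝ᵥ (c • u + d • v) = c * (u ⬝ᵥ u) + d * (u ⬝ᵥ v) := by
  simp [dotProduct_add, dotProduct_smul]

/-- Under the relative error criterion, the lower bound
`σ·Q_M(x̃−x_{k−1}, y_k−y_{k−1}, βp+q) − Q_M(x̃−x_k, 0, (1−τ)βp+(1−τ−θ)q)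
 ≥ (φ̂(σ)β/(τ+θ))‖p‖² + (2φ(σ)/(τ+θ))⟨p,q⟩ + (φ̃(σ)/((τ+θ)β))‖q‖²`. -/
theorem stmt14 (n p_ m : ℕ) (β σt σh σ τ θ : ℝ)
    (hβ : 0 < β) (hσt0 : 0 ≤ σt) (hσt1 : σt < 1) (hσh0 : 0 ≤ σh) (hσh1 : σh < 1)
    (hσl : σh ≤ σ) (hσu : σ < 1) (hτθ : 0 < τ + θ)
    (G : Matrix (Fin n) (Fin n) ℝ) (H : Matrix (Fin p_) (Fin p_) ℝ)
    (hG : G.PosSemidef) (hH : H.PosSemidef)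
    (B : Matrix (Fin m) (Fin p_) ℝ)
    (QM : (Fin n → ℝ) → (Fin p_ → ℝ) → (Fin m → ℝ) → ℝ)
    (hQM : ∀ x y γ, QM x y γ =
      (G *ᵥ x) ⬝ᵥ x + (H *ᵥ y) ⬝ᵥ y
        + ((τ - τ * θ + θ) * β / (τ + θ)) * ((B *ᵥ y) ⬝ᵥ (B *ᵥ y))
        - (2 * τ / (τ + θ)) * ((B *ᵥ y) ⬝ᵥ γ)
        + (1 / ((τ + θ) * β)) * (γ ⬝ᵥ γ))
    (xt xkm1 xk : Fin n → ℝ) (ykm1 yk : Fin p_ → ℝ) (q : Fin m → ℝ)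
    (pv : Fin m → ℝ) (hpv : pv = B *ᵥ (yk - ykm1))
    (herr : (G *ᵥ (xt - xk)) ⬝ᵥ (xt - xk)
      ≤ σh * ((G *ᵥ (xt - xkm1)) ⬝ᵥ (xt - xkm1))
        + (σt / β) * ((β • pv + q) ⬝ᵥ (β • pv + q))) :
    σ * QM (xt - xkm1) (yk - ykm1) (β • pv + q)
      - QM (xt - xk) 0 (((1 - τ) * β) • pv + (1 - τ - θ) • q)
    ≥ (((1 - τ) * ((1 + θ) * σ - 1 + τ) - σt * (τ + θ)) * β / (τ + θ)) * (pv ⬝ᵥ pv)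
      + (2 * ((1 - τ) * (σ - 1) + (1 - τ - σt) * (τ + θ)) / (τ + θ)) * (pv ⬝ᵥ q)
      + ((σ - (1 - τ - θ) ^ 2 - σt * (τ + θ)) / ((τ + θ) * β)) * (q ⬝ᵥ q) := by
  have hq1 : β • pv + q = β • pv + (1:ℝ) • q := by rw [one_smul]
  rw [hQM, hQM]
  rw [← hpv]
  simp only [Matrix.mulVec_zero, dotProduct_zero, zero_dotProduct, mul_zero,
    add_zero, sub_zero]
  rw [hq1, dot_expand, dot_expand, dot_expand2]
  rw [hq1, dot_expand] at herr
  set a := (G *ᵥ (xt - xkm1)) ⬝ᵥ (xt - xkm1) with ha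
  set b := (G *ᵥ (xt - xk)) ⬝ᵥ (xt - xk) with hb
  set h := (H *ᵥ (yk - ykm1)) ⬝ᵥ (yk - ykm1) with hh
  set P := pv ⬝ᵥ pv
  set S := pv ⬝ᵥ q
  set Q := q ⬝ᵥ q
  have ha0 : 0 ≤ a := by rw [ha, dotProduct_comm]; simpa using hG.dotProduct_mulVec_nonneg (xt - xkm1)
  have hh0 : 0 ≤ h := by rw [hh, dotProduct_comm]; simpa using hH.dotProduct_mulVec_nonneg (yk - ykm1)
  have hβ' : (β:ℝ) ≠ 0 := ne_of_gt hβ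
  have hτθ' : τ + θ ≠ 0 := ne_of_gt hτθ
  have hW0 : 0 ≤ β^2*P + 2*β*1*S + 1^2*Q := by
    have := dot_expand pv q β 1
    rw [← hq1] at this
    rw [← this]
    simpa using dotProduct_self_star_nonneg (β • pv + q)
  have hσ0 : 0 ≤ σ := le_trans hσh0 hσl
  have key : σ * (a + h + (τ - τ * θ + θ) * β / (τ + θ) * P
        - 2 * τ / (τ + θ) * (β * P + 1 * S)
        + 1 / ((τ + θ) * β) * (β ^ 2 * P + 2 * β * 1 * S + 1 ^ 2 * Q))
      - (b + 1 / ((τ + θ) * β) * (((1 - τ) * β) ^ 2 * P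
        + 2 * ((1 - τ) * β) * (1 - τ - θ) * S + (1 - τ - θ) ^ 2 * Q))
    = (((1 - τ) * ((1 + θ) * σ - 1 + τ) - σt * (τ + θ)) * β / (τ + θ)) * P
      + (2 * ((1 - τ) * (σ - 1) + (1 - τ - σt) * (τ + θ)) / (τ + θ)) * S
      + ((σ - (1 - τ - θ) ^ 2 - σt * (τ + θ)) / ((τ + θ) * β)) * Q
      + (σ * a - b + σ * h + (σt / β) * (β^2*P + 2*β*1*S + 1^2*Q)) := by
    field_simp
    ring
  have h1 : b ≤ σ * a + (σt / β) * (β^2*P + 2*β*1*S + 1^2*Q) := by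
    have : σh * a ≤ σ * a := mul_le_mul_of_nonneg_right hσl ha0
    linarith
  have h2 : 0 ≤ σ * h := mul_nonneg hσ0 hh0
  linarith [key, h1, h2]
end

section
/- Let M ∈ ℝ^{N×N} be symmetric positive semidefinite and λ ≥ 0 satisfy ‖Mv‖² ≤ λ⟨Mv, v⟩ for all v ∈ ℝ^N (e.g., λ the largest eigenvalue of M). Let T : ℝ^N → Set(ℝ^N) be monotone (⟨w − w', z − z'⟩ ≥ 0 whenever w ∈ T(z), w' ∈ T(z')), let z* satisfy 0 ∈ T(z*), let σ ∈ [0,1), and let sequences (z_k)_{k≥0}, (z̃_k)_{k≥1} in ℝ^N and nonnegative reals (η_k)_{k≥0} satisfy, for every k ≥ 1, M(z_{k−1} − z_k) ∈ T(z̃_k) and ‖z̃_k − z_k‖_M² + η_k ≤ σ‖z̃_k − z_{k−1}‖_M² + η_{k−1}. Then for every k ≥ 1, Σ_{l=1}^{k} ‖M(z_{l−1} − z_l)‖² ≤ (2λ/(1−σ))[(1+σ)‖z* − z_0‖_M² + 2η_0]; in particular there exists i ∈ {1,…,k} with ‖M(z_{i−1} − z_i)‖ ≤ √((2λ/((1−σ)k))[(1+σ)‖z*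 − z_0‖_M² + 2η_0]). -/
open Matrix

/-- Pointwise bound for the HPE-type scheme: the sum of residual
norms squared is bounded, and hence some iterate has small residual. -/
theorem stmt15 (N : ℕ) (M : Matrix (Fin N) (Fin N) ℝ) (hM : M.PosSemidef)
    (lam : ℝ) (hlam0 : 0 ≤ lam)
    (hlam : ∀ v : Fin N → ℝ, (M *ᵥ v) ⬝ᵥ (M *ᵥ v) ≤ lam * ((M *ᵥ v) ⬝ᵥ v))
    (T : (Fin N → ℝ) → Set (Fin N → ℝ))
    (hT : ∀ z z' w w', w ∈ T z → w' ∈ T z' → 0 ≤ (w - w') ⬝ᵥ (z - z'))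
    (zs : Fin N → ℝ) (hzs : (0 : Fin N → ℝ) ∈ T zs)
    (σ : ℝ) (hσ0 : 0 ≤ σ) (hσ1 : σ < 1)
    (z : ℕ → Fin N → ℝ) (zt : ℕ → Fin N → ℝ) (η : ℕ → ℝ) (hη : ∀ k, 0 ≤ η k)
    (hincl : ∀ k, 1 ≤ k → M *ᵥ (z (k - 1) - z k) ∈ T (zt k))
    (hhpe : ∀ k, 1 ≤ k →
      (M *ᵥ (zt k - z k)) ⬝ᵥ (zt k - z k) + η k
        ≤ σ * ((M *ᵥ (zt k - z (k - 1))) ⬝ᵥ (zt k - z (k - 1))) + η (k - 1)) :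
    ∀ k : ℕ, 1 ≤ k →
      (∑ l ∈ Finset.Icc 1 k,
          (M *ᵥ (z (l - 1) - z l)) ⬝ᵥ (M *ᵥ (z (l - 1) - z l)))
        ≤ (2 * lam / (1 - σ)) *
            ((1 + σ) * ((M *ᵥ (zs - z 0)) ⬝ᵥ (zs - z 0)) + 2 * η 0)
      ∧ ∃ i ∈ Finset.Icc 1 k,
          Real.sqrt ((M *ᵥ (z (i - 1) - z i)) ⬝ᵥ (M *ᵥ (z (i - 1) - z i)))
            ≤ Real.sqrt ((2 * lam / ((1 - σ) * k)) *
                ((1 + σ) * ((M *ᵥ (zs - z 0)) ⬝ᵥ (zs - z 0)) + 2 * η 0)) := by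
  -- basic facts about the bilinear form
  have hBsym : ∀ u v : Fin N → ℝ, (M *ᵥ u) ⬝ᵥ v = (M *ᵥ v) ⬝ᵥ u := by
    intro u v
    have hMs : Mᵀ = M := (by simpa using hM.1 : M.IsSymm).eq
    rw [dotProduct_comm, Matrix.dotProduct_mulVec, ← Matrix.mulVec_transpose, hMs]
  set m : (Fin N → ℝ) → ℝ := fun v => (M *ᵥ v) ⬝ᵥ v with hm
  have hmpos : ∀ v, 0 ≤ m v := by
    intro v
    have := hM.dotProduct_mulVec_nonneg v
    simpa [hm, Matrix.dotProduct_mulVec, dotProduct_comm] using this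
  have hσ1' : (0:ℝ) < 1 - σ := by linarith
  -- expansion of the quadratic form on a difference
  have expand : ∀ u v : Fin N → ℝ,
      m (u - v) = m u - 2 * ((M *ᵥ u) ⬝ᵥ v) + m v := by
    intro u v
    simp only [hm, Matrix.mulVec_sub, sub_dotProduct, dotProduct_sub]
    rw [hBsym v u]; ring
  -- per-step key inequality
  have step : ∀ l : ℕ, 1 ≤ l →
      (1 - σ) * m (zt l - z (l - 1))
        ≤ (m (zs - z (l - 1)) + η (l - 1)) - (m (zs - z l) + η l) := by
    intro l hl
    have mono := hT (zt l) zs (M *ᵥ (z (l - 1) - z l)) 0 (hincl l hl) hzs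
    rw [sub_zero] at mono
    have hpe := hhpe l hl
    -- identity: m (zs - z(l-1)) - m (zs - z l)
    --   = m (zt l - z (l-1)) - m (zt l - z l) + 2 * ((M *ᵥ (z(l-1) - z l)) ⬝ᵥ (zt l - zs))
    have id1 : m (zs - z (l - 1)) - m (zs - z l)
        = m (zt l - z (l - 1)) - m (zt l - z l)
          + 2 * ((M *ᵥ (z (l - 1) - z l)) ⬝ᵥ (zt l - zs)) := by
      rw [expand, expand, expand, expand]
      simp only [hm, Matrix.mulVec_sub, sub_dotProduct, dotProduct_sub]
      rw [hBsym (z (l-1)) zs, hBsym (z l) zs, hBsym (z (l-1)) (zt l), hBsym (z l) (zt l)]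
      ring
    have hpe' : m (zt l - z l) + η l ≤ σ * m (zt l - z (l - 1)) + η (l - 1) := hpe
    linarith
  -- per-step residual bound
  have res : ∀ l : ℕ, 1 ≤ l →
      (M *ᵥ (z (l - 1) - z l)) ⬝ᵥ (M *ᵥ (z (l - 1) - z l))
        ≤ lam * (2 * (1 + σ) * m (zt l - z (l - 1)) + 2 * (η (l - 1) - η l)) := by
    intro l hl
    have h1 := hlam (z (l - 1) - z l)
    have hpe : m (zt l - z l) + η l ≤ σ * m (zt l - z (l - 1)) + η (l - 1) := hhpe l hl
    -- m (z(l-1) - z l) ≤ 2 m (zt l - z(l-1)) + 2 m (zt l - z l)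
    have par : m (z (l - 1) - z l) ≤ 2 * m (zt l - z (l - 1)) + 2 * m (zt l - z l) := by
      have hsum : (0:ℝ) ≤ m ((zt l - z (l - 1)) + (zt l - z l)) := hmpos _
      have hdiff : z (l - 1) - z l = (zt l - z l) - (zt l - z (l - 1)) := by
        abel
      have e1 : m ((zt l - z (l - 1)) + (zt l - z l))
          = m (zt l - z (l-1)) + 2 * ((M *ᵥ (zt l - z (l-1))) ⬝ᵥ (zt l - z l))
            + m (zt l - z l) := by
        simp only [hm, Matrix.mulVec_add, add_dotProduct, dotProduct_add]
        rw [hBsym (zt l - z l) (zt l - z (l-1))]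
        ring
      have e2 : m (z (l - 1) - z l)
          = m (zt l - z l) - 2 * ((M *ᵥ (zt l - z l)) ⬝ᵥ (zt l - z (l-1)))
            + m (zt l - z (l-1)) := by
        rw [hdiff, expand]
      rw [e2]
      rw [hBsym (zt l - z l) (zt l - z (l-1))] at e2 ⊢
      linarith [e1 ▸ hsum]
    have hmr : m (z (l - 1) - z l) ≤ 2 * (1 + σ) * m (zt l - z (l - 1)) + 2 * (η (l - 1) - η l) := by
      linarith
    calc (M *ᵥ (z (l - 1) - z l)) ⬝ᵥ (M *ᵥ (z (l - 1) - z l))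
        ≤ lam * m (z (l - 1) - z l) := h1
      _ ≤ lam * (2 * (1 + σ) * m (zt l - z (l - 1)) + 2 * (η (l - 1) - η l)) :=
          mul_le_mul_of_nonneg_left hmr hlam0
  -- telescoping sums
  have hS : ∀ k : ℕ, (1 - σ) * (∑ l ∈ Finset.Icc 1 k, m (zt l - z (l - 1)))
      ≤ (m (zs - z 0) + η 0) - (m (zs - z k) + η k) := by
    intro k
    induction k with
    | zero => simp
    | succ n ih =>
        rw [Finset.sum_Icc_succ_top (by omega : 1 ≤ n + 1)]
        have hst := step (n + 1) (by omega)
        simp only [Nat.add_sub_cancel] at hst ⊢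
        have : (1 - σ) * ((∑ l ∈ Finset.Icc 1 n, m (zt l - z (l - 1)))
            + m (zt (n+1) - z n))
            = (1 - σ) * (∑ l ∈ Finset.Icc 1 n, m (zt l - z (l - 1)))
              + (1 - σ) * m (zt (n+1) - z n) := by ring
        rw [this]
        linarith
  have hSum : ∀ k : ℕ,
      (∑ l ∈ Finset.Icc 1 k, (M *ᵥ (z (l - 1) - z l)) ⬝ᵥ (M *ᵥ (z (l - 1) - z l)))
        ≤ lam * (2 * (1 + σ) * (∑ l ∈ Finset.Icc 1 k, m (zt l - z (l - 1)))
            + 2 * (η 0 - η k)) := by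
    intro k
    induction k with
    | zero => simp
    | succ n ih =>
        rw [Finset.sum_Icc_succ_top (by omega : 1 ≤ n + 1),
            Finset.sum_Icc_succ_top (by omega : 1 ≤ n + 1)]
        have hr := res (n + 1) (by omega)
        simp only [Nat.add_sub_cancel] at hr ⊢
        nlinarith [hr, ih]
  intro k hk
  set a0 : ℝ := (M *ᵥ (zs - z 0)) ⬝ᵥ (zs - z 0) with ha0
  have ha0' : a0 = m (zs - z 0) := rfl
  -- the main bound
  have hSk : (∑ l ∈ Finset.Icc 1 k, m (zt l - z (l - 1))) ≤ (m (zs - z 0) + η 0) / (1 - σ) := by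
    have h1 := hS k
    have h2 : 0 ≤ m (zs - z k) + η k := by
      have := hmpos (zs - z k); have := hη k; linarith
    rw [le_div_iff₀ hσ1']
    linarith [h1, h2]
  have hmain : (∑ l ∈ Finset.Icc 1 k,
      (M *ᵥ (z (l - 1) - z l)) ⬝ᵥ (M *ᵥ (z (l - 1) - z l)))
      ≤ (2 * lam / (1 - σ)) * ((1 + σ) * a0 + 2 * η 0) := by
    have h1 := hSum k
    have h2 : lam * (2 * (1 + σ) * (∑ l ∈ Finset.Icc 1 k, m (zt l - z (l - 1)))
        + 2 * (η 0 - η k))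
        ≤ lam * (2 * (1 + σ) * ((m (zs - z 0) + η 0) / (1 - σ)) + 2 * η 0) := by
      apply mul_le_mul_of_nonneg_left _ hlam0
      have hηk := hη k
      have : 2 * (1 + σ) * (∑ l ∈ Finset.Icc 1 k, m (zt l - z (l - 1)))
          ≤ 2 * (1 + σ) * ((m (zs - z 0) + η 0) / (1 - σ)) := by
        apply mul_le_mul_of_nonneg_left hSk (by linarith)
      linarith
    have heq : lam * (2 * (1 + σ) * ((m (zs - z 0) + η 0) / (1 - σ)) + 2 * η 0)
        = (2 * lam / (1 - σ)) * ((1 + σ) * a0 + 2 * η 0) := by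
      rw [ha0']
      field_simp
      ring
    linarith [h1, h2, heq ▸ h2]
  refine ⟨hmain, ?_⟩
  -- existence of a small residual
  have hk0 : (0:ℝ) < (k:ℝ) := by exact_mod_cast hk
  have hcard : (Finset.Icc 1 k).card = k := by
    rw [Nat.card_Icc]; omega
  have hne : (Finset.Icc 1 k).Nonempty := by
    rw [← Finset.card_pos, hcard]; omega
  have hexists : ∃ i ∈ Finset.Icc 1 k,
      (M *ᵥ (z (i - 1) - z i)) ⬝ᵥ (M *ᵥ (z (i - 1) - z i))
        ≤ (2 * lam / ((1 - σ) * k)) * ((1 + σ) * a0 + 2 * η 0) := by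
    apply Finset.exists_le_of_sum_le hne
    have hconst : ∑ _l ∈ Finset.Icc 1 k,
        (2 * lam / ((1 - σ) * k)) * ((1 + σ) * a0 + 2 * η 0)
        = (k:ℝ) * ((2 * lam / ((1 - σ) * k)) * ((1 + σ) * a0 + 2 * η 0)) := by
      rw [Finset.sum_const, hcard, nsmul_eq_mul]
    rw [hconst]
    have heq2 : (k:ℝ) * ((2 * lam / ((1 - σ) * k)) * ((1 + σ) * a0 + 2 * η 0))
        = (2 * lam / (1 - σ)) * ((1 + σ) * a0 + 2 * η 0) := by
      field_simp
    rw [heq2]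
    exact hmain
  obtain ⟨i, hi, hib⟩ := hexists
  exact ⟨i, hi, Real.sqrt_le_sqrt hib⟩
end

section
/- Let M ∈ ℝ^{N×N} be symmetric positive semidefinite, let T : ℝ^N → Set(ℝ^N) be monotone (⟨w − w', z − z'⟩ ≥ 0 whenever w ∈ T(z), w' ∈ T(z')), let z* satisfy 0 ∈ T(z*), let σ ∈ [0,1), and let sequences (z_k)_{k≥0}, (z̃_k)_{k≥1} in ℝ^N and nonnegative reals (η_k)_{k≥0} satisfy, for every k ≥ 1, M(z_{k−1} − z_k) ∈ T(z̃_k) and ‖z̃_k − z_k‖_M² + η_k ≤ σ‖z̃_k − z_{k−1}‖_M² + η_{k−1}. Then for every k ≥ 1, ‖z* − z_k‖_M² + η_k ≤ ‖z* − z_{k−1}‖_M² + (σ − 1)‖z̃_k − z_{k−1}‖_M² + η_{k−1} ≤ ‖z* − z_{k−1}‖_M² + η_{k−1}; consequently (1−σ)‖z̃_k − z_{k−1}‖_M² ≤ ‖z* − z_0‖_M² + η_0 for every k ≥ 1. -/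
open Matrix

/-- Fejér-type monotonicity of `‖z* − z_k‖_M² + η_k` and the
resulting bound `(1−σ)‖z̃_k − z_{k−1}‖_M² ≤ ‖z* − z_0‖_M² + η_0`. -/
theorem stmt16 (N : ℕ) (M : Matrix (Fin N) (Fin N) ℝ) (hM : M.PosSemidef)
    (T : (Fin N → ℝ) → Set (Fin N → ℝ))
    (hT : ∀ z z' w w', w ∈ T z → w' ∈ T z' → 0 ≤ (w - w') ⬝ᵥ (z - z'))
    (zs : Fin N → ℝ) (hzs : (0 : Fin N → ℝ) ∈ T zs)
    (σ : ℝ) (hσ0 : 0 ≤ σ) (hσ1 : σ < 1)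
    (z : ℕ → Fin N → ℝ) (zt : ℕ → Fin N → ℝ) (η : ℕ → ℝ) (hη : ∀ k, 0 ≤ η k)
    (hincl : ∀ k, 1 ≤ k → M *ᵥ (z (k - 1) - z k) ∈ T (zt k))
    (hhpe : ∀ k, 1 ≤ k →
      (M *ᵥ (zt k - z k)) ⬝ᵥ (zt k - z k) + η k
        ≤ σ * ((M *ᵥ (zt k - z (k - 1))) ⬝ᵥ (zt k - z (k - 1))) + η (k - 1)) :
    ∀ k : ℕ, 1 ≤ k →
      ((M *ᵥ (zs - z k)) ⬝ᵥ (zs - z k) + η k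
          ≤ (M *ᵥ (zs - z (k - 1))) ⬝ᵥ (zs - z (k - 1))
            + (σ - 1) * ((M *ᵥ (zt k - z (k - 1))) ⬝ᵥ (zt k - z (k - 1)))
            + η (k - 1)
        ∧ (M *ᵥ (zs - z (k - 1))) ⬝ᵥ (zs - z (k - 1))
            + (σ - 1) * ((M *ᵥ (zt k - z (k - 1))) ⬝ᵥ (zt k - z (k - 1)))
            + η (k - 1)
          ≤ (M *ᵥ (zs - z (k - 1))) ⬝ᵥ (zs - z (k - 1)) + η (k - 1))
      ∧ (1 - σ) * ((M *ᵥ (zt k - z (k - 1))) ⬝ᵥ (zt k - z (k - 1)))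
          ≤ (M *ᵥ (zs - z 0)) ⬝ᵥ (zs - z 0) + η 0 := by
  have sym : ∀ u v : Fin N → ℝ, (M *ᵥ u) ⬝ᵥ v = (M *ᵥ v) ⬝ᵥ u := by
    intro u v
    have hsym : Mᵀ = M := hM.1
    rw [dotProduct_comm, dotProduct_mulVec, ← mulVec_transpose, hsym]
  have pos : ∀ v : Fin N → ℝ, 0 ≤ (M *ᵥ v) ⬝ᵥ v := by
    intro v
    simpa [dotProduct_comm] using hM.dotProduct_mulVec_nonneg v
  -- key algebraic identity
  have key : ∀ s a b t : Fin N → ℝ,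
      (M *ᵥ (s - b)) ⬝ᵥ (s - b)
        = (M *ᵥ (s - a)) ⬝ᵥ (s - a) - (M *ᵥ (t - a)) ⬝ᵥ (t - a)
          + (M *ᵥ (t - b)) ⬝ᵥ (t - b) - 2 * ((M *ᵥ (a - b)) ⬝ᵥ (t - s)) := by
    intro s a b t
    simp only [mulVec_sub, sub_dotProduct, dotProduct_sub]
    linear_combination sym b s + sym s a + sym a t + sym t b
  -- the main one-step estimate
  have step : ∀ k : ℕ, 1 ≤ k →
      (M *ᵥ (zs - z k)) ⬝ᵥ (zs - z k) + η k
        ≤ (M *ᵥ (zs - z (k - 1))) ⬝ᵥ (zs - z (k - 1))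
          + (σ - 1) * ((M *ᵥ (zt k - z (k - 1))) ⬝ᵥ (zt k - z (k - 1)))
          + η (k - 1) := by
    intro k hk
    have hmono := hT (zt k) zs (M *ᵥ (z (k - 1) - z k)) 0 (hincl k hk) hzs
    rw [sub_zero] at hmono
    have hkey := key zs (z (k - 1)) (z k) (zt k)
    have hh := hhpe k hk
    nlinarith [hmono, hkey, hh]
  -- decrease of the Lyapunov quantity
  have dec : ∀ k : ℕ,
      (M *ᵥ (zs - z k)) ⬝ᵥ (zs - z k) + η k
        ≤ (M *ᵥ (zs - z 0)) ⬝ᵥ (zs - z 0) + η 0 := by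
    intro k
    induction k with
    | zero => exact le_refl _
    | succ n ih =>
      have h1 := step (n + 1) (Nat.le_add_left 1 n)
      simp only [Nat.add_sub_cancel] at h1
      have h2 : (σ - 1) * ((M *ᵥ (zt (n+1) - z n)) ⬝ᵥ (zt (n+1) - z n)) ≤ 0 := by
        have := pos (zt (n+1) - z n)
        nlinarith
      linarith
  intro k hk
  have h1 := step k hk
  have h2 : (σ - 1) * ((M *ᵥ (zt k - z (k-1))) ⬝ᵥ (zt k - z (k-1))) ≤ 0 := by
    have := pos (zt k - z (k-1))
    nlinarith
  refine ⟨⟨h1, by linarith⟩, ?_⟩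
  have h3 := dec (k - 1)
  have h4 := pos (zs - z k)
  have h5 := hη k
  nlinarith
end

section
/- Let M ∈ ℝ^{N×N} be symmetric positive semidefinite and λ ≥ 0 satisfy ‖Mv‖² ≤ λ⟨Mv, v⟩ for all v ∈ ℝ^N (e.g., λ the largest eigenvalue of M). Let T : ℝ^N → Set(ℝ^N) be monotone, let z* satisfy 0 ∈ T(z*), let σ ∈ [0,1), and let sequences (z_k)_{k≥0}, (z̃_k)_{k≥1} in ℝ^N and nonnegative reals (η_k)_{k≥0} satisfy, for every k ≥ 1, M(z_{k−1} − z_k) ∈ T(z̃_k) and ‖z̃_k − z_k‖_M² + η_k ≤ σ‖z̃_k − z_{k−1}‖_M² + η_{k−1}. Then for every k ≥ 1, ‖(1/k) M(z_0 − z_k)‖² ≤ (4λ/k²)(‖z* − z_0‖_M² + η_0). -/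
open Matrix

/-- Ergodic residual bound
`‖(1/k)M(z_0 − z_k)‖² ≤ (4λ/k²)(‖z* − z_0‖_M² + η_0)`. -/
theorem stmt17 (N : ℕ) (M : Matrix (Fin N) (Fin N) ℝ) (hM : M.PosSemidef)
    (lam : ℝ) (hlam0 : 0 ≤ lam)
    (hlam : ∀ v : Fin N → ℝ, (M *ᵥ v) ⬝ᵥ (M *ᵥ v) ≤ lam * ((M *ᵥ v) ⬝ᵥ v))
    (T : (Fin N → ℝ) → Set (Fin N → ℝ))
    (hT : ∀ z z' w w', w ∈ T z → w' ∈ T z' → 0 ≤ (w - w') ⬝ᵥ (z - z'))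
    (zs : Fin N → ℝ) (hzs : (0 : Fin N → ℝ) ∈ T zs)
    (σ : ℝ) (hσ0 : 0 ≤ σ) (hσ1 : σ < 1)
    (z : ℕ → Fin N → ℝ) (zt : ℕ → Fin N → ℝ) (η : ℕ → ℝ) (hη : ∀ k, 0 ≤ η k)
    (hincl : ∀ k, 1 ≤ k → M *ᵥ (z (k - 1) - z k) ∈ T (zt k))
    (hhpe : ∀ k, 1 ≤ k →
      (M *ᵥ (zt k - z k)) ⬝ᵥ (zt k - z k) + η k
        ≤ σ * ((M *ᵥ (zt k - z (k - 1))) ⬝ᵥ (zt k - z (k - 1))) + η (k - 1)) :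
    ∀ k : ℕ, 1 ≤ k →
      ((1 / (k : ℝ)) • (M *ᵥ (z 0 - z k))) ⬝ᵥ ((1 / (k : ℝ)) • (M *ᵥ (z 0 - z k)))
        ≤ (4 * lam / (k : ℝ) ^ 2) * ((M *ᵥ (zs - z 0)) ⬝ᵥ (zs - z 0) + η 0) := by
  set B : (Fin N → ℝ) → (Fin N → ℝ) → ℝ := fun x y => (M *ᵥ x) ⬝ᵥ y with hB
  have hMt : Mᵀ = M := by
    have := hM.1.eq
    simpa [Matrix.conjTranspose_eq_transpose_of_trivial, Matrix.IsHermitian] using this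
  have hsym : ∀ x y, B x y = B y x := by
    intro x y
    simp only [hB]
    rw [dotProduct_comm, dotProduct_mulVec, ← mulVec_transpose, hMt]
  have hpos : ∀ x, 0 ≤ B x x := by
    intro x
    have := hM.dotProduct_mulVec_nonneg x
    simpa [hB, dotProduct_comm] using this
  have hexp : ∀ x y u w, B (x - y) (u - w) = B x u - B x w - B y u + B y w := by
    intro x y u w
    simp only [hB, mulVec_sub, sub_dotProduct, dotProduct_sub]
    ring
  -- main decrease lemma
  have hstep : ∀ k : ℕ, 1 ≤ k →
      B (zs - z k) (zs - z k) + η k ≤ B (zs - z (k-1)) (zs - z (k-1)) + η (k-1) := by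
    intro k hk
    have hmono := hT (zt k) zs (M *ᵥ (z (k-1) - z k)) 0 (hincl k hk) hzs
    have hmono' : 0 ≤ B (z (k-1) - z k) (zt k - zs) := by
      simpa [hB] using hmono
    have hpe := hhpe k hk
    have hpe' : B (zt k - z k) (zt k - z k) + η k
        ≤ σ * B (zt k - z (k-1)) (zt k - z (k-1)) + η (k-1) := hpe
    have hQ : 0 ≤ B (zt k - z (k-1)) (zt k - z (k-1)) := hpos _
    simp only [hexp] at hmono' hpe' hQ ⊢
    have s1 := hsym (zt k) (z k)
    have s2 := hsym (zt k) (z (k-1))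
    have s3 := hsym (zs) (z k)
    have s4 := hsym (zs) (z (k-1))
    have s5 := hsym (zs) (zt k)
    have s6 := hsym (z (k-1)) (z k)
    nlinarith [mul_nonneg (sub_nonneg.2 hσ1.le) hQ]
  have han : ∀ k : ℕ, B (zs - z k) (zs - z k) + η k ≤ B (zs - z 0) (zs - z 0) + η 0 := by
    intro k
    induction k with
    | zero => exact le_rfl
    | succ n ih =>
        have := hstep (n+1) (Nat.le_add_left 1 n)
        simpa using this.trans ih
  intro k hk
  have hk0 : (0:ℝ) < (k:ℝ) := by exact_mod_cast Nat.lt_of_lt_of_le Nat.zero_lt_one hk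
  set w : Fin N → ℝ := z 0 - z k with hw
  -- bound B w w ≤ 4 * a0
  have hbound : B w w ≤ 4 * (B (zs - z 0) (zs - z 0) + η 0) := by
    have h1 := han k
    have hd : 0 ≤ B ((z 0 - zs) - (zs - z k)) ((z 0 - zs) - (zs - z k)) := hpos _
    rw [hw]
    simp only [hexp] at h1 hd ⊢
    have s3 := hsym (zs) (z k)
    have s4 := hsym (zs) (z 0)
    have s6 := hsym (z 0) (z k)
    linarith [hη 0, hη k]
  have hMw : (M *ᵥ w) ⬝ᵥ (M *ᵥ w) ≤ lam * (4 * (B (zs - z 0) (zs - z 0) + η 0)) := by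
    calc (M *ᵥ w) ⬝ᵥ (M *ᵥ w) ≤ lam * B w w := hlam w
      _ ≤ lam * (4 * (B (zs - z 0) (zs - z 0) + η 0)) := by
          exact mul_le_mul_of_nonneg_left hbound hlam0
  have hLHS : ((1 / (k : ℝ)) • (M *ᵥ w)) ⬝ᵥ ((1 / (k : ℝ)) • (M *ᵥ w))
      = (1 / (k:ℝ)^2) * ((M *ᵥ w) ⬝ᵥ (M *ᵥ w)) := by
    simp [smul_dotProduct, dotProduct_smul, smul_eq_mul]
    ring
  rw [hLHS]
  have hkpos : (0:ℝ) < 1 / (k:ℝ)^2 := by positivity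
  have : (1 / (k:ℝ)^2) * ((M *ᵥ w) ⬝ᵥ (M *ᵥ w))
      ≤ (1 / (k:ℝ)^2) * (lam * (4 * (B (zs - z 0) (zs - z 0) + η 0))) :=
    mul_le_mul_of_nonneg_left hMw hkpos.le
  calc (1 / (k:ℝ)^2) * ((M *ᵥ w) ⬝ᵥ (M *ᵥ w))
      ≤ (1 / (k:ℝ)^2) * (lam * (4 * (B (zs - z 0) (zs - z 0) + η 0))) := this
    _ = (4 * lam / (k : ℝ) ^ 2) * ((M *ᵥ (zs - z 0)) ⬝ᵥ (zs - z 0) + η 0) := by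
        simp only [hB]; ring
end

section
/- Let M ∈ ℝ^{N×N} be symmetric positive semidefinite, σ ∈ [0,1), and let sequences (z_k)_{k≥0}, (z̃_k)_{k≥1} in ℝ^N and nonnegative reals (η_k)_{k≥0} satisfy, for every k ≥ 1, ‖z̃_k − z_k‖_M² + η_k ≤ σ‖z̃_k − z_{k−1}‖_M² + η_{k−1}. Then for every k ≥ 1 and every z ∈ ℝ^N, 2 Σ_{i=1}^{k} ⟨M(z_{i−1} − z_i), z̃_i − z⟩ ≤ ‖z − z_0‖_M² + η_0. -/
open Matrix

/-- For the inexact proximal point scheme,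
`2 Σ_{i=1}^{k} ⟨M(z_{i−1} − z_i), z̃_i − z⟩ ≤ ‖z − z_0‖_M² + η_0` for all `z`. -/
theorem stmt18 (N : ℕ) (M : Matrix (Fin N) (Fin N) ℝ) (hM : M.PosSemidef)
    (σ : ℝ) (hσ0 : 0 ≤ σ) (hσ1 : σ < 1)
    (z : ℕ → Fin N → ℝ) (zt : ℕ → Fin N → ℝ) (η : ℕ → ℝ) (hη : ∀ k, 0 ≤ η k)
    (hhpe : ∀ k, 1 ≤ k →
      (M *ᵥ (zt k - z k)) ⬝ᵥ (zt k - z k) + η k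
        ≤ σ * ((M *ᵥ (zt k - z (k - 1))) ⬝ᵥ (zt k - z (k - 1))) + η (k - 1)) :
    ∀ k : ℕ, 1 ≤ k → ∀ w : Fin N → ℝ,
      2 * ∑ i ∈ Finset.Icc 1 k, (M *ᵥ (z (i - 1) - z i)) ⬝ᵥ (zt i - w)
        ≤ (M *ᵥ (w - z 0)) ⬝ᵥ (w - z 0) + η 0 := by
  intro k hk w
  have hsymm : ∀ u v : Fin N → ℝ, (M *ᵥ u) ⬝ᵥ v = (M *ᵥ v) ⬝ᵥ u := by
    intro u v
    have hT : Mᵀ = M := by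
      have := hM.isHermitian
      rwa [Matrix.IsHermitian, Matrix.conjTranspose_eq_transpose_of_trivial] at this
    rw [dotProduct_comm, Matrix.dotProduct_mulVec, ← Matrix.mulVec_transpose, hT]
  have hQ : ∀ u : Fin N → ℝ, 0 ≤ (M *ᵥ u) ⬝ᵥ u := by
    intro u
    have := hM.dotProduct_mulVec_nonneg u
    simpa [dotProduct_comm] using this
  -- key per-step identity
  have key : ∀ a b t : Fin N → ℝ,
      2 * ((M *ᵥ (a - b)) ⬝ᵥ (t - w))
        = (M *ᵥ (w - a)) ⬝ᵥ (w - a) - (M *ᵥ (w - b)) ⬝ᵥ (w - b)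
          + (M *ᵥ (t - b)) ⬝ᵥ (t - b) - (M *ᵥ (t - a)) ⬝ᵥ (t - a) := by
    intro a b t
    simp only [Matrix.mulVec_sub, sub_dotProduct, dotProduct_sub]
    have h1 := hsymm a t
    have h2 := hsymm b t
    have h3 := hsymm a w
    have h4 := hsymm b w
    have h5 := hsymm a b
    linarith
  -- main inductive bound
  have main : ∀ m : ℕ,
      2 * ∑ i ∈ Finset.Icc 1 m, (M *ᵥ (z (i - 1) - z i)) ⬝ᵥ (zt i - w)
        ≤ (M *ᵥ (w - z 0)) ⬝ᵥ (w - z 0) - (M *ᵥ (w - z m)) ⬝ᵥ (w - z m)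
          + η 0 - η m := by
    intro m
    induction m with
    | zero => simp
    | succ n ih =>
      rw [Finset.sum_Icc_succ_top (by omega : 1 ≤ n + 1), mul_add]
      have hid := key (z n) (z (n + 1)) (zt (n + 1))
      have hh := hhpe (n + 1) (by omega)
      simp only [Nat.add_sub_cancel] at hid hh ⊢
      have hle : (M *ᵥ (zt (n+1) - z (n+1))) ⬝ᵥ (zt (n+1) - z (n+1))
          ≤ σ * ((M *ᵥ (zt (n+1) - z n)) ⬝ᵥ (zt (n+1) - z n)) + η n - η (n+1) := by
        linarith
      have hσle : σ * ((M *ᵥ (zt (n+1) - z n)) ⬝ᵥ (zt (n+1) - z n))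
          ≤ (M *ᵥ (zt (n+1) - z n)) ⬝ᵥ (zt (n+1) - z n) := by
        nlinarith [hQ (zt (n+1) - z n)]
      linarith
  have := main k
  have h1 := hQ (w - z k)
  have h2 := hη k
  linarith
end
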